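/- arXiv:1612.09054 — 3 statements merged into one kernel-verified Lean document; each statement's English description precedes it below -/
import Mathlib

section
/- For all positive integers n, the convolution sum W(1,1;n) = Σ_{a+b=n, a,b≥1} σ(a)σ(b) equals (5/12)σ₃(n) + ((1−6n)/12)σ(n), where σ(m)=Σ_{d|m}d and σ₃(m)=Σ_{d|m}d³. -/
open Finset PowerSeries Real Complex

/-- σ_k(n) = sum of k-th powers of the positive divisors of n. -/
def sig (k n : ℕ) : ℕ := ∑ d ∈ n.divisors, d ^ k

/-- σ_k(n/d) ∈ ℚ with the convention that it is 0 when d ∤ n. -/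
def sigQ (k n d : ℕ) : ℚ := if d ∣ n then (sig k (n / d) : ℚ) else 0

/-- W(r,s;n) = Σ_{a,b ≥ 1, ar+bs=n} σ(a)σ(b). -/
def W (r s n : ℕ) : ℕ :=
  ∑ p ∈ (Finset.Icc 1 n ×ˢ Finset.Icc 1 n).filter (fun p => r * p.1 + s * p.2 = n),
    sig 1 p.1 * sig 1 p.2

/-! ### Auxiliary setup: quadruples ((d,u),(e,v)) with d*u + e*v = n -/

abbrev Quad := (ℕ × ℕ) × ℕ × ℕ

/-- The set of quadruples ((d,u),(e,v)) with all entries in [1,n] and d*u+e*v = n. -/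
def AA (n : ℕ) : Finset Quad :=
  ((Finset.Icc 1 n ×ˢ Finset.Icc 1 n) ×ˢ (Finset.Icc 1 n ×ˢ Finset.Icc 1 n)).filter
    (fun q => q.1.1 * q.1.2 + q.2.1 * q.2.2 = n)

lemma mem_AA {n d u e v : ℕ} :
    (((d, u), (e, v)) : Quad) ∈ AA n ↔ ((1 ≤ d ∧ d ≤ n) ∧ (1 ≤ u ∧ u ≤ n) ∧
      (1 ≤ e ∧ e ≤ n) ∧ (1 ≤ v ∧ v ≤ n)) ∧ d * u + e * v = n := by
  simp [AA, Finset.mem_filter, Finset.mem_product, Finset.mem_Icc, and_assoc]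

lemma mem_AA_of {n d u e v : ℕ} (hd : 1 ≤ d) (hu : 1 ≤ u) (he : 1 ≤ e) (hv : 1 ≤ v)
    (h : d * u + e * v = n) : (((d, u), (e, v)) : Quad) ∈ AA n := by
  have h1 : d ≤ d * u := Nat.le_mul_of_pos_right d hu
  have h2 : u ≤ d * u := Nat.le_mul_of_pos_left u hd
  have h3 : e ≤ e * v := Nat.le_mul_of_pos_right e hv
  have h4 : v ≤ e * v := Nat.le_mul_of_pos_left v he
  rw [mem_AA]
  exact ⟨⟨⟨hd, by omega⟩, ⟨hu, by omega⟩, ⟨he, by omega⟩, ⟨hv, by omega⟩⟩, h⟩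

/-- The region d < e of `AA n`. -/
def RR (n : ℕ) : Finset Quad := (AA n).filter (fun q => q.1.1 < q.2.1)

lemma mem_RR {n : ℕ} {d u e v : ℕ} :
    (((d, u), (e, v)) : Quad) ∈ RR n ↔ (((d, u), (e, v)) : Quad) ∈ AA n ∧ d < e := by
  simp [RR, Finset.mem_filter]

/-- Swap bijection: region e < d to region d < e. -/
lemma sum_swap_AA {M : Type*} [AddCommMonoid M] (n : ℕ) (F : Quad → M) :
    ∑ q ∈ (AA n).filter (fun q => q.2.1 < q.1.1), F q
      = ∑ q ∈ RR n, F (q.2, q.1) := by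
  apply Finset.sum_nbij' (fun q : Quad => (q.2, q.1)) (fun q : Quad => (q.2, q.1))
  · rintro ⟨⟨d, u⟩, e, v⟩ hq
    simp only [Finset.mem_filter, mem_AA] at hq
    obtain ⟨⟨⟨h1, h2, h3, h4⟩, h5⟩, h6⟩ := hq
    show (((e, v), (d, u)) : Quad) ∈ RR n
    rw [mem_RR, mem_AA]
    exact ⟨⟨⟨h3, h4, h1, h2⟩, by omega⟩, by omega⟩
  · rintro ⟨⟨d, u⟩, e, v⟩ hq
    rw [mem_RR, mem_AA] at hq
    obtain ⟨⟨⟨h1, h2, h3, h4⟩, h5⟩, h6⟩ := hq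
    show (((e, v), (d, u)) : Quad) ∈ (AA n).filter (fun q => q.2.1 < q.1.1)
    rw [Finset.mem_filter, mem_AA]
    exact ⟨⟨⟨h3, h4, h1, h2⟩, by omega⟩, h6⟩
  · rintro ⟨⟨d, u⟩, e, v⟩ _; rfl
  · rintro ⟨⟨d, u⟩, e, v⟩ _; rfl
  · rintro ⟨⟨d, u⟩, e, v⟩ _; rfl

/-- Transpose bijection: region u < v to region d < e, with ((d,u),(e,v)) ↦ ((u,d),(v,e)). -/
lemma sum_transpose_AA {M : Type*} [AddCommMonoid M] (n : ℕ) (F : Quad → M) :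
    ∑ q ∈ (AA n).filter (fun q => q.1.2 < q.2.2), F q
      = ∑ q ∈ RR n, F ((q.1.2, q.1.1), (q.2.2, q.2.1)) := by
  apply Finset.sum_nbij' (fun q : Quad => (((q.1.2, q.1.1), (q.2.2, q.2.1)) : Quad))
    (fun q : Quad => (((q.1.2, q.1.1), (q.2.2, q.2.1)) : Quad))
  · rintro ⟨⟨d, u⟩, e, v⟩ hq
    simp only [Finset.mem_filter, mem_AA] at hq
    obtain ⟨⟨⟨h1, h2, h3, h4⟩, h5⟩, h6⟩ := hq
    show (((u, d), (v, e)) : Quad) ∈ RR n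
    rw [mem_RR, mem_AA]
    exact ⟨⟨⟨h2, h1, h4, h3⟩, by rw [← h5]; ring⟩, h6⟩
  · rintro ⟨⟨d, u⟩, e, v⟩ hq
    rw [mem_RR, mem_AA] at hq
    obtain ⟨⟨⟨h1, h2, h3, h4⟩, h5⟩, h6⟩ := hq
    show (((u, d), (v, e)) : Quad) ∈ (AA n).filter (fun q => q.1.2 < q.2.2)
    rw [Finset.mem_filter, mem_AA]
    exact ⟨⟨⟨h2, h1, h4, h3⟩, by rw [← h5]; ring⟩, h6⟩
  · rintro ⟨⟨d, u⟩, e, v⟩ _; rfl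
  · rintro ⟨⟨d, u⟩, e, v⟩ _; rfl
  · rintro ⟨⟨d, u⟩, e, v⟩ _; rfl

/-- The bijection ((d,u),(e,v)) ↦ ((v,e),(u,d)): region v < u to region d < e. -/
lemma sum_m_AA {M : Type*} [AddCommMonoid M] (n : ℕ) (F : Quad → M) :
    ∑ q ∈ (AA n).filter (fun q => q.2.2 < q.1.2), F q
      = ∑ q ∈ RR n, F ((q.2.2, q.2.1), (q.1.2, q.1.1)) := by
  apply Finset.sum_nbij' (fun q : Quad => (((q.2.2, q.2.1), (q.1.2, q.1.1)) : Quad))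
    (fun q : Quad => (((q.2.2, q.2.1), (q.1.2, q.1.1)) : Quad))
  · rintro ⟨⟨d, u⟩, e, v⟩ hq
    simp only [Finset.mem_filter, mem_AA] at hq
    obtain ⟨⟨⟨h1, h2, h3, h4⟩, h5⟩, h6⟩ := hq
    show (((v, e), (u, d)) : Quad) ∈ RR n
    rw [mem_RR, mem_AA]
    exact ⟨⟨⟨h4, h3, h2, h1⟩, by rw [← h5]; ring⟩, h6⟩
  · rintro ⟨⟨d, u⟩, e, v⟩ hq
    rw [mem_RR, mem_AA] at hq
    obtain ⟨⟨⟨h1, h2, h3, h4⟩, h5⟩, h6⟩ := hq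
    show (((v, e), (u, d)) : Quad) ∈ (AA n).filter (fun q => q.2.2 < q.1.2)
    rw [Finset.mem_filter, mem_AA]
    exact ⟨⟨⟨h4, h3, h2, h1⟩, by rw [← h5]; ring⟩, h6⟩
  · rintro ⟨⟨d, u⟩, e, v⟩ _; rfl
  · rintro ⟨⟨d, u⟩, e, v⟩ _; rfl
  · rintro ⟨⟨d, u⟩, e, v⟩ _; rfl

/-- The key involution g((d,u),(e,v)) = ((v,e-d),(u+v,d)) of the region d < e. -/
lemma sum_g_AA {M : Type*} [AddCommMonoid M] (n : ℕ) (F : Quad → M) :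
    ∑ q ∈ RR n, F q
      = ∑ q ∈ RR n, F ((q.2.2, q.2.1 - q.1.1), (q.1.2 + q.2.2, q.1.1)) := by
  have hmem : ∀ q ∈ RR n,
      (((q.2.2, q.2.1 - q.1.1), (q.1.2 + q.2.2, q.1.1)) : Quad) ∈ RR n := by
    rintro ⟨⟨d, u⟩, e, v⟩ hq
    rw [mem_RR, mem_AA] at hq
    obtain ⟨⟨⟨h1, h2, h3, h4⟩, h5⟩, h6⟩ := hq
    show (((v, e - d), (u + v, d)) : Quad) ∈ RR n
    rw [mem_RR]
    refine ⟨?_, by omega⟩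
    apply mem_AA_of (by omega) (by omega) (by omega) (by omega)
    obtain ⟨k, hk⟩ := Nat.exists_eq_add_of_lt h6
    subst hk
    have h7 : d + k + 1 - d = k + 1 := by omega
    rw [h7, ← h5]
    ring
  have hinv : ∀ q ∈ RR n,
      (fun q : Quad => (((q.2.2, q.2.1 - q.1.1), (q.1.2 + q.2.2, q.1.1)) : Quad))
        ((fun q : Quad => (((q.2.2, q.2.1 - q.1.1), (q.1.2 + q.2.2, q.1.1)) : Quad)) q) = q := by
    rintro ⟨⟨d, u⟩, e, v⟩ hq
    rw [mem_RR] at hq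
    obtain ⟨-, h6⟩ := hq
    show (((d, u + v - v), (e - d + d, v)) : Quad) = (((d, u), (e, v)) : Quad)
    have h1 : u + v - v = u := by omega
    have h2 : e - d + d = e := by omega
    rw [h1, h2]
  apply Finset.sum_nbij'
    (fun q : Quad => (((q.2.2, q.2.1 - q.1.1), (q.1.2 + q.2.2, q.1.1)) : Quad))
    (fun q : Quad => (((q.2.2, q.2.1 - q.1.1), (q.1.2 + q.2.2, q.1.1)) : Quad))
  · exact hmem
  · exact hmem
  · exact hinv
  · exact hinv
  · intro q hq
    exact (congrArg F (hinv q hq)).symm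

/-- Trichotomy splitting of a sum. -/
lemma sum_split {α M : Type*} [DecidableEq α] [AddCommMonoid M] (s : Finset α) (F : α → M)
    (f g : α → ℕ) :
    ∑ q ∈ s, F q = ∑ q ∈ s.filter (fun q => f q < g q), F q
      + ∑ q ∈ s.filter (fun q => f q = g q), F q
      + ∑ q ∈ s.filter (fun q => g q < f q), F q := by
  classical
  rw [← Finset.sum_filter_add_sum_filter_not s (fun q => f q < g q) F]
  rw [← Finset.sum_filter_add_sum_filter_not
    (s.filter (fun q => ¬ f q < g q)) (fun q => f q = g q) F]
  rw [Finset.filter_filter, Finset.filter_filter]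
  have e1 : s.filter (fun a => ¬ f a < g a ∧ f a = g a) = s.filter (fun a => f a = g a) := by
    ext a; simp only [Finset.mem_filter]; constructor
    · rintro ⟨h1, h2⟩; exact ⟨h1, h2.2⟩
    · rintro ⟨h1, h2⟩; exact ⟨h1, by omega, h2⟩
  have e2 : s.filter (fun a => ¬ f a < g a ∧ ¬ f a = g a) = s.filter (fun a => g a < f a) := by
    ext a; simp only [Finset.mem_filter]; constructor
    · rintro ⟨h1, h2⟩; exact ⟨h1, by omega⟩
    · rintro ⟨h1, h2⟩; exact ⟨h1, by omega, by omega⟩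
  rw [e1, e2, add_assoc]

/-- The diagonal d = e, parametrized by divisors. -/
lemma sum_diag_de {M : Type*} [AddCommMonoid M] (n : ℕ) (hn : 0 < n) (F : Quad → M) :
    ∑ q ∈ (AA n).filter (fun q => q.1.1 = q.2.1), F q
      = ∑ d ∈ n.divisors, ∑ u ∈ Finset.Ico 1 (n / d), F ((d, u), (d, n / d - u)) := by
  rw [Finset.sum_sigma']
  have key : ∀ d u e v : ℕ, (((d, u), (e, v)) : Quad) ∈
      (AA n).filter (fun q => q.1.1 = q.2.1) → d ∣ n ∧ n / d = u + v ∧ e = d := by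
    intro d u e v hq
    simp only [Finset.mem_filter, mem_AA] at hq
    obtain ⟨⟨⟨h1, h2, h3, h4⟩, h5⟩, h6⟩ := hq
    have h6' : d = e := h6
    subst h6'
    have hmul : d * (u + v) = n := by rw [← h5]; ring
    refine ⟨⟨u + v, hmul.symm⟩, ?_, rfl⟩
    rw [← hmul, Nat.mul_div_cancel_left _ (show 0 < d by omega)]
  apply Finset.sum_nbij' (fun q : Quad => (⟨q.1.1, q.1.2⟩ : (_ : ℕ) × ℕ))
    (fun z : (_ : ℕ) × ℕ => (((z.1, z.2), (z.1, n / z.1 - z.2)) : Quad))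
  · rintro ⟨⟨d, u⟩, e, v⟩ hq
    obtain ⟨hdvd, hN, he⟩ := key d u e v hq
    simp only [Finset.mem_filter, mem_AA] at hq
    obtain ⟨⟨⟨h1, h2, h3, h4⟩, h5⟩, h6⟩ := hq
    simp only [Finset.mem_sigma, Nat.mem_divisors, Finset.mem_Ico]
    exact ⟨⟨hdvd, by omega⟩, by omega⟩
  · rintro ⟨d, u⟩ hz
    simp only [Finset.mem_sigma, Nat.mem_divisors, Finset.mem_Ico] at hz
    obtain ⟨⟨hdvd, hn0⟩, hu1, hu2⟩ := hz
    have hd1 : 1 ≤ d := Nat.pos_of_dvd_of_pos hdvd hn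
    show (((d, u), (d, n / d - u)) : Quad) ∈ (AA n).filter (fun q => q.1.1 = q.2.1)
    rw [Finset.mem_filter]
    refine ⟨?_, rfl⟩
    apply mem_AA_of hd1 hu1 hd1 (by omega)
    rw [show d * u + d * (n / d - u) = d * (u + (n / d - u)) from by ring,
      show u + (n / d - u) = n / d from by omega]
    exact Nat.mul_div_cancel' hdvd
  · rintro ⟨⟨d, u⟩, e, v⟩ hq
    obtain ⟨hdvd, hN, he⟩ := key d u e v hq
    show (((d, u), (d, n / d - u)) : Quad) = (((d, u), (e, v)) : Quad)
    rw [he, show n / d - u = v from by omega]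
  · rintro ⟨d, u⟩ _; rfl
  · rintro ⟨⟨d, u⟩, e, v⟩ hq
    obtain ⟨hdvd, hN, he⟩ := key d u e v hq
    have harg : (((d, u), (d, n / d - u)) : Quad) = (((d, u), (e, v)) : Quad) := by
      rw [he, show n / d - u = v from by omega]
    exact (congrArg F harg).symm

/-- The diagonal u = v, parametrized by divisors. -/
lemma sum_diag_uv {M : Type*} [AddCommMonoid M] (n : ℕ) (hn : 0 < n) (F : Quad → M) :
    ∑ q ∈ (AA n).filter (fun q => q.1.2 = q.2.2), F q
      = ∑ v ∈ n.divisors, ∑ d ∈ Finset.Ico 1 (n / v), F ((d, v), (n / v - d, v)) := by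
  rw [Finset.sum_sigma']
  have key : ∀ d u e v : ℕ, (((d, u), (e, v)) : Quad) ∈
      (AA n).filter (fun q => q.1.2 = q.2.2) → u ∣ n ∧ n / u = d + e ∧ v = u := by
    intro d u e v hq
    simp only [Finset.mem_filter, mem_AA] at hq
    obtain ⟨⟨⟨h1, h2, h3, h4⟩, h5⟩, h6⟩ := hq
    have h6' : u = v := h6
    subst h6'
    have hmul : u * (d + e) = n := by rw [← h5]; ring
    refine ⟨⟨d + e, hmul.symm⟩, ?_, rfl⟩
    rw [← hmul, Nat.mul_div_cancel_left _ (show 0 < u by omega)]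
  apply Finset.sum_nbij' (fun q : Quad => (⟨q.1.2, q.1.1⟩ : (_ : ℕ) × ℕ))
    (fun z : (_ : ℕ) × ℕ => (((z.2, z.1), (n / z.1 - z.2, z.1)) : Quad))
  · rintro ⟨⟨d, u⟩, e, v⟩ hq
    obtain ⟨hdvd, hN, hv⟩ := key d u e v hq
    simp only [Finset.mem_filter, mem_AA] at hq
    obtain ⟨⟨⟨h1, h2, h3, h4⟩, h5⟩, h6⟩ := hq
    simp only [Finset.mem_sigma, Nat.mem_divisors, Finset.mem_Ico]
    exact ⟨⟨hdvd, by omega⟩, by omega⟩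
  · rintro ⟨v, d⟩ hz
    simp only [Finset.mem_sigma, Nat.mem_divisors, Finset.mem_Ico] at hz
    obtain ⟨⟨hdvd, hn0⟩, hd1, hd2⟩ := hz
    have hv1 : 1 ≤ v := Nat.pos_of_dvd_of_pos hdvd hn
    show (((d, v), (n / v - d, v)) : Quad) ∈ (AA n).filter (fun q => q.1.2 = q.2.2)
    rw [Finset.mem_filter]
    refine ⟨?_, rfl⟩
    apply mem_AA_of hd1 hv1 (by omega) hv1
    rw [show d * v + (n / v - d) * v = (d + (n / v - d)) * v from by ring,
      show d + (n / v - d) = n / v from by omega]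
    exact Nat.div_mul_cancel hdvd
  · rintro ⟨⟨d, u⟩, e, v⟩ hq
    obtain ⟨hdvd, hN, hv⟩ := key d u e v hq
    show (((d, u), (n / u - d, u)) : Quad) = (((d, u), (e, v)) : Quad)
    rw [hv, show n / u - d = e from by omega]
  · rintro ⟨v, d⟩ _; rfl
  · rintro ⟨⟨d, u⟩, e, v⟩ hq
    obtain ⟨hdvd, hN, hv⟩ := key d u e v hq
    have harg : (((d, u), (n / u - d, u)) : Quad) = (((d, u), (e, v)) : Quad) := by
      rw [hv, show n / u - d = e from by omega]
    exact (congrArg F harg).symm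

/-- W(1,1;n) as a sum over quadruples. -/
lemma W_eq_sum_AA (n : ℕ) (hn : 0 < n) :
    (W 1 1 n : ℚ) = ∑ q ∈ AA n, ((q.1.1 : ℚ) * q.2.1) := by
  have hsig : ∀ a : ℕ, (sig 1 a : ℚ) = ∑ x ∈ a.divisorsAntidiagonal, (x.1 : ℚ) := by
    intro a
    rw [show (∑ x ∈ a.divisorsAntidiagonal, (x.1 : ℚ))
        = ∑ x ∈ a.divisorsAntidiagonal, ((fun i j => (i : ℚ)) x.1 x.2) from rfl]
    rw [Nat.sum_divisorsAntidiagonal (fun i j => (i : ℚ))]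
    simp [sig]
  unfold W
  push_cast
  simp only [one_mul]
  have step : ∀ p : ℕ × ℕ, (sig 1 p.1 : ℚ) * (sig 1 p.2) =
      ∑ z ∈ p.1.divisorsAntidiagonal ×ˢ p.2.divisorsAntidiagonal, ((z.1.1 : ℚ) * z.2.1) := by
    intro p
    rw [hsig, hsig, Finset.sum_mul_sum, ← Finset.sum_product']
  rw [Finset.sum_congr rfl (fun p _ => step p)]
  rw [Finset.sum_sigma']
  apply Finset.sum_nbij' (fun z : (_ : ℕ × ℕ) × Quad => z.2)
    (fun q : Quad => (⟨(q.1.1 * q.1.2, q.2.1 * q.2.2), q⟩ : (_ : ℕ × ℕ) × Quad))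
  · rintro ⟨⟨a, b⟩, ⟨⟨d, u⟩, e, v⟩⟩ hz
    simp only [Finset.mem_sigma, Finset.mem_filter, Finset.mem_product, Finset.mem_Icc,
      Nat.mem_divisorsAntidiagonal] at hz
    obtain ⟨⟨⟨⟨ha1, ha2⟩, hb1, hb2⟩, hab⟩, ⟨hdu, ha0⟩, hev, hb0⟩ := hz
    show (((d, u), (e, v)) : Quad) ∈ AA n
    apply mem_AA_of
    · rcases Nat.eq_zero_or_pos d with h | h
      · exfalso; apply ha0; rw [← hdu, h]; ring
      · exact h
    · rcases Nat.eq_zero_or_pos u with h | h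
      · exfalso; apply ha0; rw [← hdu, h]; ring
      · exact h
    · rcases Nat.eq_zero_or_pos e with h | h
      · exfalso; apply hb0; rw [← hev, h]; ring
      · exact h
    · rcases Nat.eq_zero_or_pos v with h | h
      · exfalso; apply hb0; rw [← hev, h]; ring
      · exact h
    · rw [hdu, hev]; exact hab
  · rintro ⟨⟨d, u⟩, e, v⟩ hq
    rw [mem_AA] at hq
    obtain ⟨⟨h1, h2, h3, h4⟩, h5⟩ := hq
    have hdu : 1 ≤ d * u := Nat.mul_pos (by omega) (by omega)
    have hev : 1 ≤ e * v := Nat.mul_pos (by omega) (by omega)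
    simp only [Finset.mem_sigma, Finset.mem_filter, Finset.mem_product, Finset.mem_Icc,
      Nat.mem_divisorsAntidiagonal]
    refine ⟨⟨⟨⟨hdu, by omega⟩, hev, by omega⟩, h5⟩, ?_, ?_⟩ <;>
      simp only [true_and, and_true, eq_self_iff_true] <;> omega
  · rintro ⟨⟨a, b⟩, ⟨⟨d, u⟩, e, v⟩⟩ hz
    simp only [Finset.mem_sigma, Finset.mem_filter, Finset.mem_product, Finset.mem_Icc,
      Nat.mem_divisorsAntidiagonal] at hz
    obtain ⟨⟨⟨⟨ha1, ha2⟩, hb1, hb2⟩, hab⟩, ⟨hdu, ha0⟩, hev, hb0⟩ := hz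
    show (⟨(d * u, e * v), ((d, u), (e, v))⟩ : (_ : ℕ × ℕ) × Quad)
      = ⟨(a, b), ((d, u), (e, v))⟩
    rw [hdu, hev]
  · rintro ⟨⟨d, u⟩, e, v⟩ _; rfl
  · rintro ⟨⟨a, b⟩, ⟨⟨d, u⟩, e, v⟩⟩ _; rfl

/-- Gauss sum. -/
lemma gauss1 (N : ℕ) : (∑ d ∈ Finset.Ico 1 N, (d : ℚ)) * 2 = N * (N - 1) := by
  induction N with
  | zero => simp
  | succ N ih =>
    rcases Nat.eq_zero_or_pos N with h | h
    · subst h; simp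
    · rw [Finset.sum_Ico_succ_top (by omega)]
      push_cast
      push_cast at ih
      linear_combination ih
/-- Sum of squares. -/
lemma gauss2 (N : ℕ) : (∑ d ∈ Finset.Ico 1 N, (d : ℚ) * d) * 6 = N * (N - 1) * (2 * N - 1) := by
  induction N with
  | zero => simp
  | succ N ih =>
    rcases Nat.eq_zero_or_pos N with h | h
    · subst h; simp
    · rw [Finset.sum_Ico_succ_top (by omega)]
      push_cast
      push_cast at ih
      linear_combination ih

/-- W(1,1;n) = (5/12)σ₃(n) + ((1−6n)/12)σ(n). -/
theorem W_one_one (n : ℕ) (hn : 0 < n) :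
    (W 1 1 n : ℚ) = 5/12 * sig 3 n + (1 - 6 * n)/12 * sig 1 n := by
  classical
  set sde := ∑ q ∈ RR n, ((q.1.1 : ℚ) * q.2.1) with hsde
  set sd2 := ∑ q ∈ RR n, ((q.1.1 : ℚ) * q.1.1) with hsd2
  set se2 := ∑ q ∈ RR n, ((q.2.1 : ℚ) * q.2.1) with hse2
  set suv := ∑ q ∈ RR n, ((q.1.2 : ℚ) * q.2.2) with hsuv
  set su2 := ∑ q ∈ RR n, ((q.1.2 : ℚ) * q.1.2) with hsu2
  set sv2 := ∑ q ∈ RR n, ((q.2.2 : ℚ) * q.2.2) with hsv2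
  set p1 := ∑ d ∈ n.divisors, ∑ u ∈ Finset.Ico 1 (n / d), ((d : ℚ) * d) with hp1
  set p2de := ∑ v ∈ n.divisors, ∑ d ∈ Finset.Ico 1 (n / v),
    ((d : ℚ) * ((n / v - d : ℕ) : ℚ)) with hp2de
  set p2d2 := ∑ v ∈ n.divisors, ∑ d ∈ Finset.Ico 1 (n / v), ((d : ℚ) * d) with hp2d2
  have hRlt : ∀ q ∈ RR n, q.1.1 < q.2.1 := by
    intro q hq
    exact (Finset.mem_filter.mp hq).2
  -- (e1): suv = sde - sd2
  have e1 : suv = sde - sd2 := by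
    rw [hsuv, hsde, hsd2, sum_g_AA n (fun q => ((q.1.2 : ℚ) * q.2.2)), ← Finset.sum_sub_distrib]
    apply Finset.sum_congr rfl
    intro q hq
    have hlt := hRlt q hq
    show (((q.2.1 - q.1.1 : ℕ) : ℚ) * (q.1.1 : ℚ)) = _
    rw [Nat.cast_sub (le_of_lt hlt)]
    ring
  -- (e2): sv2 = sd2
  have e2 : sv2 = sd2 := by
    rw [hsv2, hsd2, sum_g_AA n (fun q => ((q.2.2 : ℚ) * q.2.2))]
  -- (e3): su2 = se2 - 2*sde + sd2
  have e3 : su2 = se2 - 2 * sde + sd2 := by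
    rw [hsu2, hse2, hsde, hsd2, sum_g_AA n (fun q => ((q.1.2 : ℚ) * q.1.2))]
    rw [show (2 : ℚ) * ∑ q ∈ RR n, ((q.1.1 : ℚ) * q.2.1)
        = ∑ q ∈ RR n, 2 * ((q.1.1 : ℚ) * q.2.1) from Finset.mul_sum _ _ _,
      ← Finset.sum_sub_distrib, ← Finset.sum_add_distrib]
    apply Finset.sum_congr rfl
    intro q hq
    have hlt := hRlt q hq
    show (((q.2.1 - q.1.1 : ℕ) : ℚ) * ((q.2.1 - q.1.1 : ℕ) : ℚ)) = _
    rw [Nat.cast_sub (le_of_lt hlt)]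
    ring
  -- split of total de-sum by (d,e)
  have e4 : ∑ q ∈ AA n, ((q.1.1 : ℚ) * q.2.1) = 2 * sde + p1 := by
    rw [sum_split (AA n) (fun q => ((q.1.1 : ℚ) * q.2.1)) (fun q => q.1.1) (fun q => q.2.1)]
    rw [sum_swap_AA n (fun q => ((q.1.1 : ℚ) * q.2.1))]
    rw [sum_diag_de n hn (fun q => ((q.1.1 : ℚ) * q.2.1))]
    have hA : ∑ q ∈ RR n, ((((q.2, q.1) : Quad).1.1 : ℚ) * (((q.2, q.1) : Quad).2.1 : ℚ))
        = sde :=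
      Finset.sum_congr rfl (fun q _ => by
        show ((q.2.1 : ℚ) * (q.1.1 : ℚ)) = ((q.1.1 : ℚ) * q.2.1); ring)
    have hB : (∑ d ∈ n.divisors, ∑ u ∈ Finset.Ico 1 (n / d),
        (((((d, u), (d, n / d - u)) : Quad).1.1 : ℚ) *
          ((((d, u), (d, n / d - u)) : Quad).2.1 : ℚ))) = p1 := rfl
    rw [hA, hB, show (AA n).filter (fun q : Quad => q.1.1 < q.2.1) = RR n from rfl, ← hsde]
    ring
  -- split of total de-sum by (u,v)
  have e5 : ∑ q ∈ AA n, ((q.1.1 : ℚ) * q.2.1) = 2 * suv + p2de := by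
    rw [sum_split (AA n) (fun q => ((q.1.1 : ℚ) * q.2.1)) (fun q => q.1.2) (fun q => q.2.2)]
    rw [sum_transpose_AA n (fun q => ((q.1.1 : ℚ) * q.2.1))]
    rw [sum_m_AA n (fun q => ((q.1.1 : ℚ) * q.2.1))]
    rw [sum_diag_uv n hn (fun q => ((q.1.1 : ℚ) * q.2.1))]
    have hA : ∑ q ∈ RR n, (((((q.1.2, q.1.1), (q.2.2, q.2.1)) : Quad).1.1 : ℚ) *
        ((((q.1.2, q.1.1), (q.2.2, q.2.1)) : Quad).2.1 : ℚ)) = suv := rfl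
    have hB : ∑ q ∈ RR n, (((((q.2.2, q.2.1), (q.1.2, q.1.1)) : Quad).1.1 : ℚ) *
        ((((q.2.2, q.2.1), (q.1.2, q.1.1)) : Quad).2.1 : ℚ)) = suv :=
      Finset.sum_congr rfl (fun q _ => by
        show ((q.2.2 : ℚ) * (q.1.2 : ℚ)) = ((q.1.2 : ℚ) * q.2.2); ring)
    have hC : (∑ v ∈ n.divisors, ∑ d ∈ Finset.Ico 1 (n / v),
        (((((d, v), (n / v - d, v)) : Quad).1.1 : ℚ) *
          ((((d, v), (n / v - d, v)) : Quad).2.1 : ℚ))) = p2de := rfl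
    rw [hA, hB, hC]
    ring
  -- split of total d²-sum by (d,e)
  have e6 : ∑ q ∈ AA n, ((q.1.1 : ℚ) * q.1.1) = sd2 + se2 + p1 := by
    rw [sum_split (AA n) (fun q => ((q.1.1 : ℚ) * q.1.1)) (fun q => q.1.1) (fun q => q.2.1)]
    rw [sum_swap_AA n (fun q => ((q.1.1 : ℚ) * q.1.1))]
    rw [sum_diag_de n hn (fun q => ((q.1.1 : ℚ) * q.1.1))]
    have hA : ∑ q ∈ RR n, ((((q.2, q.1) : Quad).1.1 : ℚ) * (((q.2, q.1) : Quad).1.1 : ℚ))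
        = se2 := rfl
    have hB : (∑ d ∈ n.divisors, ∑ u ∈ Finset.Ico 1 (n / d),
        (((((d, u), (d, n / d - u)) : Quad).1.1 : ℚ) *
          ((((d, u), (d, n / d - u)) : Quad).1.1 : ℚ))) = p1 := rfl
    rw [hA, hB, show (AA n).filter (fun q : Quad => q.1.1 < q.2.1) = RR n from rfl, ← hsd2]
    ring
  -- split of total d²-sum by (u,v)
  have e7 : ∑ q ∈ AA n, ((q.1.1 : ℚ) * q.1.1) = su2 + sv2 + p2d2 := by
    rw [sum_split (AA n) (fun q => ((q.1.1 : ℚ) * q.1.1)) (fun q => q.1.2) (fun q => q.2.2)]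
    rw [sum_transpose_AA n (fun q => ((q.1.1 : ℚ) * q.1.1))]
    rw [sum_m_AA n (fun q => ((q.1.1 : ℚ) * q.1.1))]
    rw [sum_diag_uv n hn (fun q => ((q.1.1 : ℚ) * q.1.1))]
    have hA : ∑ q ∈ RR n, (((((q.1.2, q.1.1), (q.2.2, q.2.1)) : Quad).1.1 : ℚ) *
        ((((q.1.2, q.1.1), (q.2.2, q.2.1)) : Quad).1.1 : ℚ)) = su2 := rfl
    have hB : ∑ q ∈ RR n, (((((q.2.2, q.2.1), (q.1.2, q.1.1)) : Quad).1.1 : ℚ) *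
        ((((q.2.2, q.2.1), (q.1.2, q.1.1)) : Quad).1.1 : ℚ)) = sv2 := rfl
    have hC : (∑ v ∈ n.divisors, ∑ d ∈ Finset.Ico 1 (n / v),
        (((((d, v), (n / v - d, v)) : Quad).1.1 : ℚ) *
          ((((d, v), (n / v - d, v)) : Quad).1.1 : ℚ))) = p2d2 := rfl
    rw [hA, hB, hC]
    ring
  -- combine: W = (p2de - p1)/2 + p2d2
  have hW : (W 1 1 n : ℚ) = (p2de - p1) / 2 + p2d2 := by
    rw [W_eq_sum_AA n hn, e4]
    have hb : 2 * sd2 = p2de - p1 := by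
      have h := e5.symm.trans e4
      rw [e1] at h
      linarith
    have ha : 2 * sde = sd2 + p2d2 - p1 := by
      have h := e7.symm.trans e6
      rw [e2, e3] at h
      linarith
    linarith
  rw [hW]
  -- evaluate the divisor sums
  have hIco : ∀ N : ℕ, ∑ d ∈ Finset.Ico 1 N, ((d : ℚ) * ((N - d : ℕ) : ℚ))
      = ((N : ℚ) ^ 3 - N) / 6 := by
    intro N
    have h : ∑ d ∈ Finset.Ico 1 N, ((d : ℚ) * ((N - d : ℕ) : ℚ))
        = ∑ d ∈ Finset.Ico 1 N, ((N : ℚ) * d - (d : ℚ) * d) := by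
      apply Finset.sum_congr rfl
      intro d hd
      simp only [Finset.mem_Ico] at hd
      rw [Nat.cast_sub (le_of_lt hd.2)]
      ring
    rw [h, Finset.sum_sub_distrib, ← Finset.mul_sum]
    linear_combination ((N : ℚ) / 2) * gauss1 N - (1 / 6) * gauss2 N
  have hIco2 : ∀ N : ℕ, ∑ d ∈ Finset.Ico 1 N, ((d : ℚ) * d)
      = (N : ℚ) * ((N : ℚ) - 1) * (2 * (N : ℚ) - 1) / 6 := by
    intro N
    linear_combination (1 / 6 : ℚ) * gauss2 N
  have hp1' : p1 = ∑ d ∈ n.divisors, ((n : ℚ) * d - (d : ℚ) * d) := by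
    rw [hp1]
    apply Finset.sum_congr rfl
    intro d hd
    simp only [Nat.mem_divisors] at hd
    have hd1 : 1 ≤ d := Nat.pos_of_dvd_of_pos hd.1 hn
    have hN1 : 1 ≤ n / d := (Nat.one_le_div_iff hd1).mpr (Nat.le_of_dvd hn hd.1)
    rw [Finset.sum_const, Nat.card_Ico, nsmul_eq_mul]
    have hmul : ((n / d : ℕ) : ℚ) * d = n := by
      exact_mod_cast congrArg (fun x : ℕ => (x : ℚ)) (Nat.div_mul_cancel hd.1)
    rw [Nat.cast_sub hN1]
    linear_combination (d : ℚ) * hmul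
  have hp2de' : p2de = ∑ v ∈ n.divisors, ((((n / v : ℕ) : ℚ)) ^ 3 - ((n / v : ℕ) : ℚ)) / 6 := by
    rw [hp2de]
    apply Finset.sum_congr rfl
    intro v _
    exact hIco (n / v)
  have hp2d2' : p2d2 = ∑ v ∈ n.divisors,
      ((n / v : ℕ) : ℚ) * (((n / v : ℕ) : ℚ) - 1) * (2 * ((n / v : ℕ) : ℚ) - 1) / 6 := by
    rw [hp2d2]
    apply Finset.sum_congr rfl
    intro v _
    exact hIco2 (n / v)
  have hdiv1 : ∑ v ∈ n.divisors, ((((n / v : ℕ) : ℚ)) ^ 3 - ((n / v : ℕ) : ℚ)) / 6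
      = ∑ v ∈ n.divisors, (((v : ℚ) ^ 3 - (v : ℚ)) / 6) :=
    Nat.sum_div_divisors n (fun v => ((v : ℚ) ^ 3 - (v : ℚ)) / 6)
  have hdiv2 : ∑ v ∈ n.divisors,
      ((n / v : ℕ) : ℚ) * (((n / v : ℕ) : ℚ) - 1) * (2 * ((n / v : ℕ) : ℚ) - 1) / 6
      = ∑ v ∈ n.divisors, ((v : ℚ) * ((v : ℚ) - 1) * (2 * (v : ℚ) - 1) / 6) :=
    Nat.sum_div_divisors n (fun v => (v : ℚ) * ((v : ℚ) - 1) * (2 * (v : ℚ) - 1) / 6)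
  rw [hp1', hp2de', hp2d2', hdiv1, hdiv2]
  have hsig3 : (sig 3 n : ℚ) = ∑ d ∈ n.divisors, (d : ℚ) ^ 3 := by
    rw [sig]
    push_cast
    rfl
  have hsig1 : (sig 1 n : ℚ) = ∑ d ∈ n.divisors, (d : ℚ) := by
    rw [sig]
    push_cast
    simp
  rw [hsig3, hsig1, Finset.mul_sum, Finset.mul_sum, ← Finset.sum_sub_distrib, Finset.sum_div,
    ← Finset.sum_add_distrib, ← Finset.sum_add_distrib]
  apply Finset.sum_congr rfl
  intro d _
  ring
end

section
/- Assume E₂(−1/z)=z²(E₂(z)−1/(2πiz)) and E₂(z+1)=E₂(z) for all z in the upper half plane. Let p₁,p₂ be distinct primes and L_{p₁p₂}(z)=E₂(z)−p₁p₂E₂(p₁p₂z). Then with A_{p₁}=[[−1,0],[p₁,−1]], L_{p₁p₂}(A_{p₁}⁻¹z)=(p₁z+1)²(E₂(z)−(p₁/p₂)E₂((p₁z+1)/p₂)). -/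
open Finset Real Complex

/-- The weight-2 Eisenstein series E₂(z) = 1 − 24 Σ_{n≥1} σ(n) e^{2πinz}
(the n = 0 term of the tsum vanishes since sig 1 0 = 0). -/
noncomputable def E2 (z : ℂ) : ℂ :=
  1 - 24 * ∑' n : ℕ, (sig 1 n : ℂ) * Complex.exp (2 * Real.pi * Complex.I * n * z)

/-- L_t(z) = E₂(z) − t E₂(tz). -/
noncomputable def L (t : ℕ) (z : ℂ) : ℂ := E2 z - t * E2 (t * z)

lemma E2_add_nat (hT : ∀ z : ℂ, 0 < z.im → E2 (z + 1) = E2 z)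
    (n : ℕ) (z : ℂ) (hz : 0 < z.im) : E2 (z + n) = E2 z := by
  induction n with
  | zero => simp
  | succ k ih =>
      have h1 : (z + ((k : ℂ) + 1)) = (z + k) + 1 := by ring
      have h2 : 0 < (z + (k : ℂ)).im := by
        simpa [Complex.add_im] using hz
      calc E2 (z + (k + 1 : ℕ)) = E2 ((z + k) + 1) := by push_cast; rw [h1]
        _ = E2 (z + k) := hT _ h2
        _ = E2 z := ih

lemma im_neg_inv_pos (w : ℂ) (hw : 0 < w.im) : 0 < (-1 / w).im := by
  have h0 : w ≠ 0 := fun h => by simp [h] at hw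
  have : (-1 / w) = -(w⁻¹) := by field_simp
  rw [this, Complex.neg_im, Complex.inv_im, neg_div, neg_neg]
  exact div_pos hw (Complex.normSq_pos.mpr h0)

lemma aux1 (q z c A p : ℂ) (hq : q ≠ 0) (hz : z ≠ 0) (hc : c ≠ 0)
    (hrel : q = p * z + 1) :
    q ^ 2 / z ^ 2 * (z ^ 2 * (A - 1 / (c * z)) - -z / (c * q)) = q ^ 2 * A - p * q / c := by
  field_simp
  subst hrel
  ring

lemma aux2 (q c B : ℂ) (p₂ : ℂ) (hq : q ≠ 0) (hc : c ≠ 0) (hp₂ : p₂ ≠ 0) :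
    (q / p₂) ^ 2 * (B - p₂ / (c * q)) = q ^ 2 / p₂ ^ 2 * B - q / (c * p₂) := by
  field_simp

set_option maxHeartbeats 2000000 in
/-- Assuming the S- and T-transformations of E₂, the Fourier expansion of L_{p₁p₂}
at the cusp 1/p₁: L_{p₁p₂}(A_{p₁}⁻¹z) = (p₁z+1)²(E₂(z) − (p₁/p₂)E₂((p₁z+1)/p₂)),
where A_{p₁}⁻¹z = z/(p₁z+1). -/
theorem L_at_cusp_one_over_p1
    (hS : ∀ z : ℂ, 0 < z.im →
      E2 (-1 / z) = z ^ 2 * (E2 z - 1 / (2 * Real.pi * Complex.I * z)))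
    (hT : ∀ z : ℂ, 0 < z.im → E2 (z + 1) = E2 z)
    (p₁ p₂ : ℕ) (hp₁ : p₁.Prime) (hp₂ : p₂.Prime) (hne : p₁ ≠ p₂)
    (z : ℂ) (hz : 0 < z.im) :
    L (p₁ * p₂) (z / (p₁ * z + 1))
      = ((p₁ : ℂ) * z + 1) ^ 2 * (E2 z - ((p₁ : ℂ) / (p₂ : ℂ)) * E2 (((p₁ : ℂ) * z + 1) / (p₂ : ℂ))) := by
  have hzne : z ≠ 0 := fun h => by simp [h] at hz
  have hp1pos : (0 : ℝ) < (p₁ : ℝ) := by exact_mod_cast hp₁.pos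
  have hp2pos : (0 : ℝ) < (p₂ : ℝ) := by exact_mod_cast hp₂.pos
  have hp1ne : (p₁ : ℂ) ≠ 0 := by exact_mod_cast hp₁.pos.ne'
  have hp2ne : (p₂ : ℂ) ≠ 0 := by exact_mod_cast hp₂.pos.ne'
  have hqim : 0 < ((p₁ : ℂ) * z + 1).im := by
    have : ((p₁ : ℂ) * z + 1).im = (p₁ : ℝ) * z.im := by
      simp [Complex.add_im, Complex.mul_im]
    rw [this]; exact mul_pos hp1pos hz
  have hqne : (p₁ : ℂ) * z + 1 ≠ 0 := fun h => by simp [h] at hqim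
  have hIpi : (2 : ℂ) * Real.pi * Complex.I ≠ 0 := by
    simp [Real.pi_ne_zero, Complex.I_ne_zero, Complex.ofReal_ne_zero]
  -- the auxiliary point u
  set u : ℂ := -1 / z - (p₁ : ℂ) with hu_def
  have hu_im : 0 < u.im := by
    have h1 : u.im = (-1 / z).im := by
      simp [hu_def, Complex.sub_im]
    rw [h1]; exact im_neg_inv_pos z hz
  have hune : u ≠ 0 := fun h => by simp [h] at hu_im
  -- E2 at z/(p₁ z + 1)
  have hu2 : u = -((p₁ : ℂ) * z + 1) / z := by
    rw [hu_def]; field_simp; ring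
  have key1 : -1 / u = z / ((p₁ : ℂ) * z + 1) := by
    rw [div_eq_div_iff hune hqne, hu2]; field_simp
  have h1 : E2 (z / ((p₁ : ℂ) * z + 1)) = u ^ 2 * (E2 u - 1 / (2 * Real.pi * Complex.I * u)) := by
    rw [← key1]; exact hS u hu_im
  have h2 : E2 u = E2 (-1 / z) := by
    have h := E2_add_nat hT p₁ u hu_im
    have : u + (p₁ : ℂ) = -1 / z := by rw [hu_def]; ring
    rw [this] at h; exact h.symm
  have h3 : E2 (-1 / z) = z ^ 2 * (E2 z - 1 / (2 * Real.pi * Complex.I * z)) := hS z hz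
  -- the auxiliary point s
  set s : ℂ := ((p₁ : ℂ) * z + 1) / (p₂ : ℂ) with hs_def
  have hs_im : 0 < s.im := by
    have : s.im = ((p₁ : ℂ) * z + 1).im / (p₂ : ℝ) := by
      rw [hs_def]
      rw [Complex.div_im]
      simp [Complex.normSq_natCast]
      field_simp
    rw [this]; exact div_pos hqim hp2pos
  have hsne : s ≠ 0 := fun h => by simp [h] at hs_im
  have hv_im : 0 < (-1 / s).im := im_neg_inv_pos s hs_im
  have h4 : E2 ((p₁ : ℂ) * (p₂ : ℂ) * (z / ((p₁ : ℂ) * z + 1))) = E2 (-1 / s) := by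
    have h := E2_add_nat hT p₂ (-1 / s) hv_im
    have heq : -1 / s + (p₂ : ℂ) = (p₁ : ℂ) * (p₂ : ℂ) * (z / ((p₁ : ℂ) * z + 1)) := by
      rw [hs_def]; field_simp; ring
    rw [heq] at h; exact h
  have h5 : E2 (-1 / s) = s ^ 2 * (E2 s - 1 / (2 * Real.pi * Complex.I * s)) := hS s hs_im
  -- put everything together
  have hcast : ((p₁ * p₂ : ℕ) : ℂ) = (p₁ : ℂ) * (p₂ : ℂ) := by push_cast; ring
  have hpine : (Real.pi : ℂ) ≠ 0 := Complex.ofReal_ne_zero.mpr Real.pi_ne_zero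
  have hu_inv : 1 / (2 * (Real.pi : ℂ) * Complex.I * u)
      = -z / (2 * (Real.pi : ℂ) * Complex.I * ((p₁ : ℂ) * z + 1)) := by
    rw [div_eq_div_iff (mul_ne_zero hIpi hune) (mul_ne_zero hIpi hqne), hu2]
    field_simp
  have hu_sq : u ^ 2 = ((p₁ : ℂ) * z + 1) ^ 2 / z ^ 2 := by
    rw [hu2]; ring
  have hs_inv : 1 / (2 * (Real.pi : ℂ) * Complex.I * (((p₁ : ℂ) * z + 1) / (p₂ : ℂ)))
      = (p₂ : ℂ) / (2 * (Real.pi : ℂ) * Complex.I * ((p₁ : ℂ) * z + 1)) := by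
    rw [div_eq_div_iff (mul_ne_zero hIpi (div_ne_zero hqne hp2ne)) (mul_ne_zero hIpi hqne)]
    field_simp
  have H1 : E2 (z / ((p₁ : ℂ) * z + 1))
      = ((p₁ : ℂ) * z + 1) ^ 2 * E2 z
        - (p₁ : ℂ) * ((p₁ : ℂ) * z + 1) / (2 * (Real.pi : ℂ) * Complex.I) := by
    rw [h1, h2, h3, hu_inv, hu_sq]
    exact aux1 _ _ _ _ _ hqne hzne hIpi rfl
  have H2 : E2 ((p₁ : ℂ) * (p₂ : ℂ) * (z / ((p₁ : ℂ) * z + 1)))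
      = ((p₁ : ℂ) * z + 1) ^ 2 / (p₂ : ℂ) ^ 2 * E2 (((p₁ : ℂ) * z + 1) / (p₂ : ℂ))
        - ((p₁ : ℂ) * z + 1) / (2 * (Real.pi : ℂ) * Complex.I * (p₂ : ℂ)) := by
    rw [h4, h5, hs_def, hs_inv]
    exact aux2 _ _ _ _ hqne hIpi hp2ne
  rw [L, hcast, H1, H2]
  field_simp
  ring
end

section
/- For distinct primes p₁,p₂, the unique solution (b₁,b₂,b₃,b₄) of the system b₁+b₂+b₃+b₄=(1−p₁p₂)², b₁+b₂/p₁⁴+b₃/p₂⁴+b₄/(p₁⁴p₂⁴)=((1−p₁p₂)/(p₁p₂))², b₁+b₂+b₃/p₂⁴+b₄/p₂⁴=(1−p₁/p₂)², b₁+b₂/p₁⁴+b₃+b₄/p₁⁴=(1−p₂/p₁)² is b₁=1−2p₁p₂/((p₁²+1)(p₂²+1)), b₂=−2p₁³p₂/((p₁²+1)(p₂²+1)), b₃=−2p₁p₂³/((p₁²+1)(p₂²+1)), b₄=p₁²p₂²−2p₁³p₂³/((p₁²+1)(p₂²+1)). -/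
open Finset PowerSeries Real Complex

/-- The unique solution of the 4×4 linear system coming from the constant terms of
(L_{p₁p₂})² and E₄(dz) at the cusps of Γ₀(p₁p₂). -/
theorem linear_system_p1p2_sq (p₁ p₂ : ℕ) (hp₁ : p₁.Prime) (hp₂ : p₂.Prime) (hne : p₁ ≠ p₂)
    (b₁ b₂ b₃ b₄ : ℚ) :
    (b₁ + b₂ + b₃ + b₄ = (1 - (p₁ : ℚ) * (p₂ : ℚ))^2 ∧
     b₁ + b₂ / (p₁ : ℚ)^4 + b₃ / (p₂ : ℚ)^4 + b₄ / ((p₁ : ℚ)^4 * (p₂ : ℚ)^4)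
        = ((1 - (p₁ : ℚ) * (p₂ : ℚ)) / ((p₁ : ℚ) * (p₂ : ℚ)))^2 ∧
     b₁ + b₂ + b₃ / (p₂ : ℚ)^4 + b₄ / (p₂ : ℚ)^4 = (1 - (p₁ : ℚ)/(p₂ : ℚ))^2 ∧
     b₁ + b₂ / (p₁ : ℚ)^4 + b₃ + b₄ / (p₁ : ℚ)^4 = (1 - (p₂ : ℚ)/(p₁ : ℚ))^2) ↔
    (b₁ = 1 - 2 * p₁ * p₂ / (((p₁ : ℚ)^2 + 1) * ((p₂ : ℚ)^2 + 1)) ∧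
     b₂ = -2 * (p₁ : ℚ)^3 * p₂ / (((p₁ : ℚ)^2 + 1) * ((p₂ : ℚ)^2 + 1)) ∧
     b₃ = -2 * (p₁ : ℚ) * (p₂ : ℚ)^3 / (((p₁ : ℚ)^2 + 1) * ((p₂ : ℚ)^2 + 1)) ∧
     b₄ = (p₁ : ℚ)^2 * (p₂ : ℚ)^2
          - 2 * (p₁ : ℚ)^3 * (p₂ : ℚ)^3 / (((p₁ : ℚ)^2 + 1) * ((p₂ : ℚ)^2 + 1))) := by
  have hP : 2 ≤ (p₁:ℚ) := by exact_mod_cast hp₁.two_le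
  have hQ : 2 ≤ (p₂:ℚ) := by exact_mod_cast hp₂.two_le
  set P : ℚ := (p₁:ℚ) with hPdef
  set Q : ℚ := (p₂:ℚ) with hQdef
  have hP0 : P ≠ 0 := by linarith
  have hQ0 : Q ≠ 0 := by linarith
  have hP1 : P^4 - 1 ≠ 0 := by nlinarith [pow_le_pow_left₀ (by norm_num : (0:ℚ) ≤ 2) hP 4]
  have hQ1 : Q^4 - 1 ≠ 0 := by nlinarith [pow_le_pow_left₀ (by norm_num : (0:ℚ) ≤ 2) hQ 4]
  have hP2 : (P^2+1) ≠ 0 := by positivity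
  have hQ2 : (Q^2+1) ≠ 0 := by positivity
  have hM : (P^4-1)*(Q^4-1)*P^2*Q^2 ≠ 0 :=
    mul_ne_zero (mul_ne_zero (mul_ne_zero hP1 hQ1) (pow_ne_zero 2 hP0)) (pow_ne_zero 2 hQ0)
  constructor
  · rintro ⟨h1, h2, h3, h4⟩
    field_simp at h2 h3 h4
    have k1 : b₁ * ((P^4-1)*(Q^4-1)*P^2*Q^2)
        = (P^4-1)*(Q^4-1)*P^2*Q^2 - 2*P*Q*((P^2-1)*(Q^2-1)*P^2*Q^2) := by
      linear_combination (P^2*Q^2)*h1 + (P^2*Q^2)*h2 - P^2*(Q^2*h3) - Q^2*(P^2*h4)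
    have k2 : b₂ * ((P^4-1)*(Q^4-1)*P^2*Q^2) = -2*P^3*Q*((P^2-1)*(Q^2-1)*P^2*Q^2) := by
      linear_combination (-P^6*Q^2)*h1 - (P^2*Q^2)*h2 + P^6*(Q^2*h3) + Q^2*(P^2*h4)
    have k3 : b₃ * ((P^4-1)*(Q^4-1)*P^2*Q^2) = -2*P*Q^3*((P^2-1)*(Q^2-1)*P^2*Q^2) := by
      linear_combination (-P^2*Q^6)*h1 - (P^2*Q^2)*h2 + P^2*(Q^2*h3) + Q^6*(P^2*h4)
    have k4 : b₄ * ((P^4-1)*(Q^4-1)*P^2*Q^2)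
        = P^2*Q^2*((P^4-1)*(Q^4-1)*P^2*Q^2) - 2*P^3*Q^3*((P^2-1)*(Q^2-1)*P^2*Q^2) := by
      linear_combination (P^6*Q^6)*h1 + (P^2*Q^2)*h2 - P^6*(Q^2*h3) - Q^6*(P^2*h4)
    refine ⟨?_, ?_, ?_, ?_⟩
    · rw [eq_div_of_mul_eq hM k1]; field_simp; ring
    · rw [eq_div_of_mul_eq hM k2]; field_simp; ring
    · rw [eq_div_of_mul_eq hM k3]; field_simp; ring
    · rw [eq_div_of_mul_eq hM k4]; field_simp; ring
  · rintro ⟨e1, e2, e3, e4⟩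
    subst e1 e2 e3 e4
    refine ⟨by field_simp; ring, by field_simp; ring, by field_simp; ring, by field_simp; ring⟩
end
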